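/- Let (X,Y) be a t-structure in a Krull–Schmidt k-linear triangulated category T, and let x₁ ⊕ x₂ →[f₁ f₂] t → y → Σ(x₁⊕x₂) be the truncation triangle of an object t, with x₁, x₂ ≠ 0. Form the octahedron over the composition x₁ → x₁ ⊕ x₂ → t, giving a distinguished triangle x₂ →g u → y with u the cone of f₁ : x₁ → t. Then the map g : x₂ → u is non-zero. -/

import Mathlib

open CategoryTheory Limits Pretriangulated

universe v u

/-- A t-structure in a triangulated category `C`: a pair of strictly full (i.e. closed
under isomorphism) subcategories `(X, Y)` with `ΣX ⊆ X`, `Hom(X, Y) = 0` and truncation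
triangles for every object. -/
structure TStruct (C : Type u) [Category.{v} C] [Preadditive C] [HasZeroObject C]
    [HasShift C ℤ] [∀ n : ℤ, (shiftFunctor C n).Additive] [Pretriangulated C] where
  X : Set C
  Y : Set C
  X_iso : ∀ ⦃a b : C⦄, (a ≅ b) → a ∈ X → b ∈ X
  Y_iso : ∀ ⦃a b : C⦄, (a ≅ b) → a ∈ Y → b ∈ Y
  shift_mem : ∀ x ∈ X, x⟦(1 : ℤ)⟧ ∈ X
  hom_zero : ∀ ⦃x⦄, x ∈ X → ∀ ⦃y⦄, y ∈ Y → ∀ f : x ⟶ y, f = 0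
  trunc : ∀ t : C, ∃ (x y : C) (f : x ⟶ t) (g : t ⟶ y) (h : y ⟶ x⟦(1 : ℤ)⟧),
    x ∈ X ∧ y ∈ Y ∧ Triangle.mk f g h ∈ distTriang C

/-- Given the truncation triangle `x₁ ⊞ x₂ →[f₁ f₂] t → y → Σ(x₁ ⊞ x₂)` of `t` with
`x₁, x₂ ≠ 0`, and the octahedron over `x₁ → x₁ ⊞ x₂ → t` producing a distinguished
triangle `x₂ →g u → y` (where `u` is the cone of `f₁`), the map `g : x₂ → u` is
non-zero. -/
theorem octahedron_map_nonzero {C : Type u} [Category.{v} C] [Preadditive C]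
    [HasZeroObject C] [HasShift C ℤ] [∀ n : ℤ, (shiftFunctor C n).Additive]
    [Pretriangulated C] [HasBinaryBiproducts C] (S : TStruct C)
    {x₁ x₂ t y u : C} (f₁ : x₁ ⟶ t) (f₂ : x₂ ⟶ t) (gy : t ⟶ y)
    (hy' : y ⟶ (x₁ ⊞ x₂)⟦(1 : ℤ)⟧)
    (hT : Triangle.mk (biprod.desc f₁ f₂) gy hy' ∈ distTriang C)
    (hx : (x₁ ⊞ x₂) ∈ S.X) (hy : y ∈ S.Y)
    (hx₁ : ¬ IsZero x₁) (hx₂ : ¬ IsZero x₂)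
    -- the cone of `f₁`:
    (p : t ⟶ u) (q : u ⟶ x₁⟦(1 : ℤ)⟧)
    (hTu : Triangle.mk f₁ p q ∈ distTriang C)
    -- the octahedral triangle `x₂ → u → y`:
    (g : x₂ ⟶ u) (r : u ⟶ y) (s : y ⟶ x₂⟦(1 : ℤ)⟧)
    (hTo : Triangle.mk g r s ∈ distTriang C)
    -- compatibilities from the octahedron:
    (hcomm₁ : biprod.desc f₁ f₂ ≫ p = biprod.snd ≫ g)
    (hcomm₂ : p ≫ r = gy) :
    g ≠ 0 := by
  intro hg
  -- rotate the octahedral triangle; its third map is `-g⟦1⟧ = 0`, so `s` is split epi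
  have hrot := rot_of_distTriang _ hTo
  obtain ⟨σ, hσ⟩ := Triangle.coyoneda_exact₃ _ hrot (𝟙 (x₂⟦(1 : ℤ)⟧))
    (by show 𝟙 (x₂⟦(1 : ℤ)⟧) ≫ (-(shiftFunctor C (1 : ℤ)).map g) = 0; rw [hg, Functor.map_zero, neg_zero, comp_zero])
  -- `σ : x₂⟦1⟧ ⟶ y` with `𝟙 = σ ≫ s`
  dsimp [Triangle.rotate] at hσ
  -- any map `(x₁ ⊞ x₂)⟦1⟧ ⟶ y` is zero, hence `σ = 0`
  have hzero : (shiftFunctor C (1 : ℤ)).map (biprod.snd : x₁ ⊞ x₂ ⟶ x₂) ≫ σ = 0 :=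
    S.hom_zero (S.shift_mem _ hx) hy _
  have hσ0 : σ = 0 := by
    have : (shiftFunctor C (1 : ℤ)).map (biprod.inr : x₂ ⟶ x₁ ⊞ x₂) ≫
        ((shiftFunctor C (1 : ℤ)).map (biprod.snd : x₁ ⊞ x₂ ⟶ x₂) ≫ σ) = σ := by
      rw [← Category.assoc, ← Functor.map_comp]
      simp
    rw [hzero, comp_zero] at this
    exact this.symm
  replace hσ : 𝟙 (x₂⟦(1 : ℤ)⟧) = 0 := by rw [hσ, hσ0]; exact zero_comp
  have hz : IsZero (x₂⟦(1 : ℤ)⟧) := (IsZero.iff_id_eq_zero _).2 hσ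
  have hz2 : IsZero x₂ := by
    have := (shiftFunctor C (-1 : ℤ)).map_isZero hz
    exact this.of_iso ((shiftFunctorCompIsoId C (1 : ℤ) (-1 : ℤ) (by ring)).app x₂).symm
  exact hx₂ hz2
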